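/- In a separable topological space $Y$, the family $\mathcal{B} = \{\mathrm{int}_Y(\overline{U}) : U \text{ open in } Y\}$ has cardinality at most $2^{\aleph_0}$, and $\mathcal{B}$ is a base for a coarser topology on $Y$ that is Hausdorff whenever $Y$ is Hausdorff. -/

import Mathlib

open Cardinal TopologicalSpace Set

lemma regular_idem {Y : Type u} [TopologicalSpace Y] (U : Set Y) :
    interior (closure (interior (closure U))) = interior (closure U) := by
  apply subset_antisymm
  · calc interior (closure (interior (closure U)))
        ⊆ interior (closure (closure U)) :=
          interior_mono (closure_mono interior_subset)
      _ = interior (closure U) := by rw [closure_closure]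
  · conv_lhs => rw [← interior_interior (s := closure U)]
    exact interior_mono subset_closure

lemma regular_inter {Y : Type u} [TopologicalSpace Y] (U V : Set Y) :
    interior (closure (interior (closure U) ∩ interior (closure V))) =
      interior (closure U) ∩ interior (closure V) := by
  apply subset_antisymm
  · calc interior (closure (interior (closure U) ∩ interior (closure V)))
        ⊆ interior (closure (interior (closure U)) ∩ closure (interior (closure V))) :=
          interior_mono (closure_inter_subset_inter_closure _ _)
      _ ⊆ interior (closure (interior (closure U))) ∩
            interior (closure (interior (closure V))) := by
          rw [interior_inter]
      _ = interior (closure U) ∩ interior (closure V) := by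
          rw [regular_idem, regular_idem]
  · have hopen : IsOpen (interior (closure U) ∩ interior (closure V)) :=
      isOpen_interior.inter isOpen_interior
    conv_lhs => rw [← hopen.interior_eq]
    exact interior_mono subset_closure

lemma disjoint_regular {Y : Type u} [TopologicalSpace Y] {U V : Set Y}
    (_hU : IsOpen U) (hV : IsOpen V) (h : Disjoint U V) :
    Disjoint (interior (closure U)) (interior (closure V)) := by
  have h1 : Disjoint (closure U) V := h.closure_left hV
  have h2 : Disjoint (interior (closure U)) V := h1.mono_left interior_subset
  have h3 : Disjoint (interior (closure U)) (closure V) := h2.closure_right isOpen_interior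
  exact h3.mono_right interior_subset

/-- In a separable Hausdorff space `Y`, the family
`B = {int (closure U) : U open}` has cardinality at most `𝔠`, and it is a base for a
coarser topology on `Y` which is again Hausdorff. -/
theorem regularOpen_family_base {Y : Type u} [ty : TopologicalSpace Y] [T2Space Y]
    [SeparableSpace Y] :
    #↥((fun U => interior (closure U)) '' {U : Set Y | IsOpen U}) ≤ Cardinal.continuum ∧
    ty ≤ TopologicalSpace.generateFrom
        ((fun U => interior (closure U)) '' {U : Set Y | IsOpen U}) ∧
    @IsTopologicalBasis Y
        (TopologicalSpace.generateFrom ((fun U => interior (closure U)) '' {U : Set Y | IsOpen U}))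
        ((fun U => interior (closure U)) '' {U : Set Y | IsOpen U}) ∧
    @T2Space Y
        (TopologicalSpace.generateFrom
          ((fun U => interior (closure U)) '' {U : Set Y | IsOpen U})) := by
  set B : Set (Set Y) := (fun U => interior (closure U)) '' {U : Set Y | IsOpen U} with hB
  refine ⟨?_, ?_, ?_, ?_⟩
  · -- cardinality
    obtain ⟨D, hDc, hDd⟩ := exists_countable_dense Y
    have : Countable ↥D := hDc.to_subtype
    have hinj : Function.Injective (fun V : ↥B => (Subtype.val ⁻¹' (V : Set Y) : Set ↥D)) := by
      rintro ⟨V, hV⟩ ⟨W, hW⟩ hVW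
      simp only [Subtype.mk.injEq]
      have hinter : D ∩ V = D ∩ W := by
        rw [← Subtype.image_preimage_coe D V, ← Subtype.image_preimage_coe D W]
        simp only at hVW
        rw [hVW]
      have key : ∀ S : Set Y, S ∈ B → S = interior (closure (D ∩ S)) := by
        rintro S ⟨U, hU, rfl⟩
        have hSopen : IsOpen (interior (closure U)) := isOpen_interior
        have h1 : interior (closure U) ⊆ closure (interior (closure U) ∩ D) :=
          hDd.open_subset_closure_inter hSopen
        have h2 : closure (interior (closure U) ∩ D) = closure (interior (closure U)) := by
          apply subset_antisymm (closure_mono inter_subset_left)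
          exact closure_minimal h1 isClosed_closure
        rw [Set.inter_comm, h2, regular_idem]
      rw [key V hV, key W hW, hinter]
    calc #↥B ≤ #(Set ↥D) := Cardinal.mk_le_of_injective hinj
      _ = 2 ^ #↥D := Cardinal.mk_set
      _ ≤ 2 ^ Cardinal.aleph0 :=
          Cardinal.power_le_power_left two_ne_zero Cardinal.mk_le_aleph0
      _ = Cardinal.continuum := Cardinal.two_power_aleph0
  · -- coarser
    exact le_generateFrom (by rintro s ⟨U, hU, rfl⟩; exact isOpen_interior)
  · -- basis
    refine @IsTopologicalBasis.mk Y (generateFrom B) B ?_ ?_ rfl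
    · rintro t₁ ⟨U, hU, rfl⟩ t₂ ⟨V, hV, rfl⟩ x hx
      exact ⟨interior (closure U) ∩ interior (closure V),
        ⟨interior (closure U) ∩ interior (closure V),
          IsOpen.inter (@isOpen_interior Y ty _) (@isOpen_interior Y ty _),
          regular_inter U V⟩, hx, subset_rfl⟩
    · apply Set.eq_univ_of_univ_subset
      have : (Set.univ : Set Y) ∈ B :=
        ⟨Set.univ, @isOpen_univ Y ty, by simp⟩
      exact Set.subset_sUnion_of_mem this
  · -- T2
    refine @T2Space.mk Y (generateFrom B) fun x y hxy => ?_
    obtain ⟨U, V, hU, hV, hxU, hyV, hUV⟩ := t2_separation hxy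
    refine ⟨interior (closure U), interior (closure V),
      GenerateOpen.basic _ ⟨U, hU, rfl⟩, GenerateOpen.basic _ ⟨V, hV, rfl⟩,
      ?_, ?_, disjoint_regular hU hV hUV⟩
    · exact interior_maximal subset_closure hU hxU
    · exact interior_maximal subset_closure hV hyV
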